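/- Let (p_n) ∈ SVA₊. Suppose the weighted geometric means w_n of a positive sequence (u_n) converge to a > 0. Then (u_n) converges to a if and only if liminf_{λ→1⁻} limsup_{n→∞} { |∏_{k=λ_n+1}^{n} (u_n/u_k)^{p_k}|* }^{1/(P_n − P_{λ_n})} = 1. -/

import Mathlib

open Filter

noncomputable def mulAbs (x : ℝ) : ℝ := if 1 ≤ x then x else x⁻¹

noncomputable def Psum (p : ℕ → ℝ) (n : ℕ) : ℝ := ∑ k ∈ Finset.range (n + 1), p k

noncomputable def wgm (p u : ℕ → ℝ) (n : ℕ) : ℝ :=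
  (∏ k ∈ Finset.range (n + 1), u k ^ p k) ^ (1 / Psum p n)

def SVA (p : ℕ → ℝ) : Prop :=
  ∀ l : ℝ, 0 < l → l ≠ 1 →
    0 < liminf (fun n : ℕ => |Psum p ⌊l * (n : ℝ)⌋₊ / Psum p n - 1|) atTop

lemma Psum_pos {p : ℕ → ℝ} (hp : ∀ n, 0 ≤ p n) (hp0 : 0 < p 0) (n : ℕ) : 0 < Psum p n := by
  have h1 : p 0 ≤ Psum p n :=
    Finset.single_le_sum (fun i _ => hp i) (Finset.mem_range.mpr (Nat.succ_pos n))
  linarith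

lemma Psum_mono {p : ℕ → ℝ} (hp : ∀ n, 0 ≤ p n) {m n : ℕ} (h : m ≤ n) :
    Psum p m ≤ Psum p n :=
  Finset.sum_le_sum_of_subset_of_nonneg
    (Finset.range_subset_range.mpr (Nat.succ_le_succ h)) (fun i _ _ => hp i)

lemma sum_Ioc_eq (g : ℕ → ℝ) {m n : ℕ} (h : m ≤ n) :
    ∑ k ∈ Finset.Ioc m n, g k
      = (∑ k ∈ Finset.range (n+1), g k) - (∑ k ∈ Finset.range (m+1), g k) := by
  rw [← Finset.Ico_add_one_add_one_eq_Ioc, Finset.sum_Ico_eq_sub g (Nat.add_le_add_right h 1)]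

lemma mulAbs_exp (x : ℝ) : mulAbs (Real.exp x) = Real.exp |x| := by
  unfold mulAbs
  split_ifs with h
  · rw [abs_of_nonneg (Real.one_le_exp_iff.mp h)]
  · rw [← Real.exp_neg, abs_of_neg]
    rw [← Real.exp_lt_one_iff]
    exact lt_of_not_ge h

lemma term_eq {p u : ℕ → ℝ} (hu : ∀ n, 0 < u n) (m n : ℕ) (D : ℝ) :
    (mulAbs (∏ k ∈ Finset.Ioc m n, (u n / u k) ^ p k)) ^ (1 / D)
      = Real.exp (|∑ k ∈ Finset.Ioc m n, p k * (Real.log (u n) - Real.log (u k))| * (1 / D)) := by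
  have hprod : ∏ k ∈ Finset.Ioc m n, (u n / u k) ^ p k
      = Real.exp (∑ k ∈ Finset.Ioc m n, p k * (Real.log (u n) - Real.log (u k))) := by
    rw [Real.exp_sum]
    refine Finset.prod_congr rfl (fun k _ => ?_)
    rw [Real.rpow_def_of_pos (div_pos (hu n) (hu k)),
      Real.log_div (hu n).ne' (hu k).ne', mul_comm]
  rw [hprod, mulAbs_exp, Real.rpow_def_of_pos (Real.exp_pos _), Real.log_exp]

lemma log_wgm {p u : ℕ → ℝ} (hu : ∀ n, 0 < u n) (n : ℕ) :
    Real.log (wgm p u n)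
      = (∑ k ∈ Finset.range (n+1), p k * Real.log (u k)) / Psum p n := by
  unfold wgm
  rw [Real.rpow_def_of_pos (Finset.prod_pos (fun k _ => Real.rpow_pos_of_pos (hu k) _)),
    Real.log_exp, Real.log_prod (fun k _ => (Real.rpow_pos_of_pos (hu k) _).ne')]
  have h2 : (∑ k ∈ Finset.range (n+1), Real.log (u k ^ p k))
      = ∑ k ∈ Finset.range (n+1), p k * Real.log (u k) :=
    Finset.sum_congr rfl (fun k _ => by rw [Real.log_rpow (hu k)])
  rw [h2, mul_one_div]

lemma floor_tendsto {l : ℝ} (hl : 0 < l) :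
    Tendsto (fun n : ℕ => ⌊l * (n : ℝ)⌋₊) atTop atTop :=
  Filter.Tendsto.comp tendsto_nat_floor_atTop
    (Tendsto.const_mul_atTop hl tendsto_natCast_atTop_atTop)

lemma floor_le_self {l : ℝ} (hl1 : l ≤ 1) (n : ℕ) : ⌊l * (n : ℝ)⌋₊ ≤ n := by
  have h : l * (n : ℝ) ≤ (n : ℝ) := mul_le_of_le_one_left (Nat.cast_nonneg n) hl1
  calc ⌊l * (n : ℝ)⌋₊ ≤ ⌊(n : ℝ)⌋₊ := Nat.floor_le_floor h
    _ = n := Nat.floor_natCast n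

lemma delayed_mean {p : ℕ → ℝ} (hp : ∀ n, 0 ≤ p n) (hp0 : 0 < p 0)
    (hSVA : SVA p) {l : ℝ} (hl : l ∈ Set.Ioo (0:ℝ) 1)
    (S : ℕ → ℝ) (A : ℝ) (hT : Tendsto (fun n => S n / Psum p n) atTop (nhds A)) :
    ∃ c > 0, (∀ᶠ n in atTop, c * Psum p n ≤ Psum p n - Psum p ⌊l * (n:ℝ)⌋₊) ∧
      Tendsto (fun n => (S n - S ⌊l * (n:ℝ)⌋₊) / (Psum p n - Psum p ⌊l * (n:ℝ)⌋₊))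
        atTop (nhds A) := by
  obtain ⟨hl0, hl1⟩ := hl
  set lam : ℕ → ℕ := fun n => ⌊l * (n : ℝ)⌋₊ with hlam
  have hPpos := Psum_pos hp hp0
  have hr1 : ∀ n, Psum p (lam n) / Psum p n ≤ 1 := fun n =>
    div_le_one_of_le₀ (Psum_mono hp (floor_le_self hl1.le n)) (hPpos n).le
  have habs : ∀ n, |Psum p (lam n) / Psum p n - 1| = 1 - Psum p (lam n) / Psum p n := by
    intro n
    rw [abs_of_nonpos (by linarith [hr1 n])]
    ring
  set c0 : ℝ := liminf (fun n : ℕ => |Psum p (lam n) / Psum p n - 1|) atTop with hc0def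
  have hc0 : 0 < c0 := hSVA l hl0 (ne_of_lt hl1)
  have hbdd : IsBoundedUnder (· ≥ ·) atTop
      (fun n : ℕ => |Psum p (lam n) / Psum p n - 1|) :=
    isBoundedUnder_of ⟨0, fun n => abs_nonneg _⟩
  have hev : ∀ᶠ n in atTop, c0 / 2 < |Psum p (lam n) / Psum p n - 1| :=
    eventually_lt_of_lt_liminf (by linarith) hbdd
  refine ⟨c0 / 2, by linarith, ?_, ?_⟩
  · filter_upwards [hev] with n hn
    rw [habs n] at hn
    have := (div_lt_iff₀ (hPpos n)).mp (by linarith : Psum p (lam n) / Psum p n < 1 - c0/2)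
    nlinarith [hPpos n]
  · have hD : ∀ᶠ n in atTop, c0/2 * Psum p n ≤ Psum p n - Psum p (lam n) := by
      filter_upwards [hev] with n hn
      rw [habs n] at hn
      have := (div_lt_iff₀ (hPpos n)).mp (by linarith : Psum p (lam n) / Psum p n < 1 - c0/2)
      nlinarith [hPpos n]
    set T : ℕ → ℝ := fun n => S n / Psum p n with hTdef
    have hE : Tendsto (fun n => T n - A) atTop (nhds 0) := by
      simpa using hT.sub_const A
    have hEl : Tendsto (fun n => T (lam n) - A) atTop (nhds 0) :=
      hE.comp (floor_tendsto hl0)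
    have hg : Tendsto (fun n => |T n - A| + (1/(c0/2)) * (|T n - A| + |T (lam n) - A|))
        atTop (nhds 0) := by
      have := (hE.abs.add ((hE.abs.add hEl.abs).const_mul (1/(c0/2))))
      simpa using this
    have hsq : Tendsto (fun n => (S n - S (lam n)) / (Psum p n - Psum p (lam n)) - A)
        atTop (nhds 0) := by
      apply squeeze_zero_norm' _ hg
      filter_upwards [hD] with n hn
      have hDpos : 0 < Psum p n - Psum p (lam n) := by nlinarith [hPpos n]
      have hkey : (S n - S (lam n)) / (Psum p n - Psum p (lam n)) - A
          = (T n - A) + (Psum p (lam n) / (Psum p n - Psum p (lam n))) * (T n - T (lam n)) := by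
        have h1 : S n = S n / Psum p n * Psum p n := (div_mul_cancel₀ _ (hPpos n).ne').symm
        have h2 : S (lam n) = S (lam n) / Psum p (lam n) * Psum p (lam n) :=
          (div_mul_cancel₀ _ (hPpos (lam n)).ne').symm
        rw [hTdef]
        field_simp
        nth_rewrite 1 [h1]
        nth_rewrite 1 [h2]
        ring
      rw [Real.norm_eq_abs, hkey]
      have hfrac : Psum p (lam n) / (Psum p n - Psum p (lam n)) ≤ 1/(c0/2) := by
        rw [div_le_div_iff₀ hDpos (by linarith : (0:ℝ) < c0/2)]
        have h1 : Psum p (lam n) ≤ Psum p n := Psum_mono hp (floor_le_self hl1.le n)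
        nlinarith [hPpos n]
      have hfrac0 : 0 ≤ Psum p (lam n) / (Psum p n - Psum p (lam n)) :=
        div_nonneg (hPpos _).le hDpos.le
      have h2 : |T n - T (lam n)| ≤ |T n - A| + |T (lam n) - A| := by
        calc |T n - T (lam n)| = |(T n - A) - (T (lam n) - A)| := by ring_nf
          _ ≤ _ := abs_sub _ _
      calc |(T n - A) + (Psum p (lam n) / (Psum p n - Psum p (lam n))) * (T n - T (lam n))|
          ≤ |T n - A| + (Psum p (lam n) / (Psum p n - Psum p (lam n))) * |T n - T (lam n)| := by
            refine (abs_add_le _ _).trans ?_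
            rw [abs_mul, abs_of_nonneg hfrac0]
        _ ≤ |T n - A| + (1/(c0/2)) * (|T n - A| + |T (lam n) - A|) := by
            have hm : (Psum p (lam n) / (Psum p n - Psum p (lam n))) * |T n - T (lam n)|
                ≤ (1/(c0/2)) * (|T n - A| + |T (lam n) - A|) :=
              mul_le_mul hfrac h2 (abs_nonneg _) (by positivity)
            linarith
    have := hsq.add_const A
    simpa using this

theorem tauberian_left (p u : ℕ → ℝ) (a : ℝ)
    (hp : ∀ n, 0 ≤ p n) (hp0 : 0 < p 0)
    (hP : Tendsto (Psum p) atTop atTop) (hSVA : SVA p)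
    (hu : ∀ n, 0 < u n) (ha : 0 < a)
    (hw : Tendsto (wgm p u) atTop (nhds a)) :
    Tendsto u atTop (nhds a) ↔
      liminf (fun l : ℝ =>
          limsup (fun n : ℕ =>
              (mulAbs (∏ k ∈ Finset.Ioc ⌊l * (n : ℝ)⌋₊ n, (u n / u k) ^ p k)) ^
                (1 / (Psum p n - Psum p ⌊l * (n : ℝ)⌋₊))) atTop)
        (nhdsWithin 1 (Set.Ioo 0 1)) = 1 := by
  have hPpos := Psum_pos hp hp0
  set A : ℝ := Real.log a with hA
  set S : ℕ → ℝ := fun n => ∑ k ∈ Finset.range (n+1), p k * Real.log (u k) with hS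
  have hT : Tendsto (fun n => S n / Psum p n) atTop (nhds A) := by
    have hlogw : Tendsto (fun n => Real.log (wgm p u n)) atTop (nhds A) :=
      (Real.continuousAt_log ha.ne').tendsto.comp hw
    exact hlogw.congr (fun n => log_wgm hu n)
  have hB : ∀ m n : ℕ, m ≤ n →
      (∑ k ∈ Finset.Ioc m n, p k * (Real.log (u n) - Real.log (u k)))
        = (Psum p n - Psum p m) * Real.log (u n) - (S n - S m) := by
    intro m n h
    have e1 : (∑ k ∈ Finset.Ioc m n, p k * (Real.log (u n) - Real.log (u k)))
        = (∑ k ∈ Finset.Ioc m n, p k) * Real.log (u n)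
          - ∑ k ∈ Finset.Ioc m n, p k * Real.log (u k) := by
      rw [Finset.sum_mul, ← Finset.sum_sub_distrib]
      exact Finset.sum_congr rfl (fun k _ => by ring)
    rw [e1, sum_Ioc_eq p h, sum_Ioc_eq (fun k => p k * Real.log (u k)) h]
    unfold Psum
    rw [hS]
  have hkey : ∀ l ∈ Set.Ioo (0:ℝ) 1, ∃ M : ℕ → ℝ, Tendsto M atTop (nhds A) ∧
      ∀ᶠ n : ℕ in atTop,
        (mulAbs (∏ k ∈ Finset.Ioc ⌊l * (n : ℝ)⌋₊ n, (u n / u k) ^ p k)) ^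
          (1 / (Psum p n - Psum p ⌊l * (n : ℝ)⌋₊))
        = Real.exp |Real.log (u n) - M n| := by
    intro l hl
    obtain ⟨c, hc, hDge, hM⟩ := delayed_mean hp hp0 hSVA hl S A hT
    refine ⟨_, hM, ?_⟩
    filter_upwards [hDge] with n hn
    have hPn := hPpos n
    have hDpos : 0 < Psum p n - Psum p ⌊l * (n:ℝ)⌋₊ :=
      lt_of_lt_of_le (by positivity) hn
    have hmn : ⌊l * (n:ℝ)⌋₊ ≤ n := floor_le_self hl.2.le n
    rw [term_eq hu _ n _]
    congr 1
    rw [hB _ n hmn]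
    have e2 : (Psum p n - Psum p ⌊l * (n:ℝ)⌋₊) * Real.log (u n) - (S n - S ⌊l * (n:ℝ)⌋₊)
        = (Psum p n - Psum p ⌊l * (n:ℝ)⌋₊) *
          (Real.log (u n) - (S n - S ⌊l * (n:ℝ)⌋₊) / (Psum p n - Psum p ⌊l * (n:ℝ)⌋₊)) := by
      field_simp
    rw [e2, abs_mul, abs_of_pos hDpos, mul_one_div, mul_comm (Psum p n - Psum p ⌊l * (n:ℝ)⌋₊) _,
      mul_div_assoc, div_self hDpos.ne', mul_one]
  have hFexp : ∀ (l : ℝ) (n : ℕ),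
      (mulAbs (∏ k ∈ Finset.Ioc ⌊l * (n : ℝ)⌋₊ n, (u n / u k) ^ p k)) ^
        (1 / (Psum p n - Psum p ⌊l * (n : ℝ)⌋₊))
      = Real.exp (|∑ k ∈ Finset.Ioc ⌊l*(n:ℝ)⌋₊ n, p k * (Real.log (u n) - Real.log (u k))| *
          (1 / (Psum p n - Psum p ⌊l * (n : ℝ)⌋₊))) :=
    fun l n => term_eq hu _ n _
  have hneb : (nhdsWithin (1:ℝ) (Set.Ioo 0 1)).NeBot := right_nhdsWithin_Ioo_neBot one_pos
  constructor
  · -- forward direction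
    intro huu
    have hvA : Tendsto (fun n => Real.log (u n)) atTop (nhds A) :=
      (Real.continuousAt_log ha.ne').tendsto.comp huu
    have hLone : ∀ l ∈ Set.Ioo (0:ℝ) 1,
        limsup (fun n : ℕ =>
            (mulAbs (∏ k ∈ Finset.Ioc ⌊l * (n : ℝ)⌋₊ n, (u n / u k) ^ p k)) ^
              (1 / (Psum p n - Psum p ⌊l * (n : ℝ)⌋₊))) atTop = 1 := by
      intro l hl
      obtain ⟨M, hM, hFeq⟩ := hkey l hl
      have h0 : Tendsto (fun n => Real.exp |Real.log (u n) - M n|) atTop (nhds 1) := by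
        have h1 : Tendsto (fun n => Real.log (u n) - M n) atTop (nhds 0) := by
          simpa using hvA.sub hM
        have h2 : Tendsto (fun n => |Real.log (u n) - M n|) atTop (nhds 0) := by
          simpa using h1.abs
        have h3 := (Real.continuous_exp.tendsto 0).comp h2
        simpa [Function.comp_def] using h3
      have h3 : Tendsto (fun n : ℕ =>
          (mulAbs (∏ k ∈ Finset.Ioc ⌊l * (n : ℝ)⌋₊ n, (u n / u k) ^ p k)) ^
            (1 / (Psum p n - Psum p ⌊l * (n : ℝ)⌋₊))) atTop (nhds 1) :=
        h0.congr' (hFeq.mono fun n h => h.symm)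
      exact h3.limsup_eq
    have heq : (fun l : ℝ => limsup (fun n : ℕ =>
        (mulAbs (∏ k ∈ Finset.Ioc ⌊l * (n : ℝ)⌋₊ n, (u n / u k) ^ p k)) ^
          (1 / (Psum p n - Psum p ⌊l * (n : ℝ)⌋₊))) atTop)
        =ᶠ[nhdsWithin 1 (Set.Ioo 0 1)] fun _ => (1:ℝ) := by
      filter_upwards [self_mem_nhdsWithin] with l hl
      exact hLone l hl
    rw [liminf_congr heq]
    exact liminf_const 1
  · -- backward direction
    intro hcond
    have hLnn : ∀ l : ℝ, 0 ≤ limsup (fun n : ℕ =>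
        (mulAbs (∏ k ∈ Finset.Ioc ⌊l * (n : ℝ)⌋₊ n, (u n / u k) ^ p k)) ^
          (1 / (Psum p n - Psum p ⌊l * (n : ℝ)⌋₊))) atTop := by
      intro l
      rw [limsup_eq]
      apply Real.sInf_nonneg
      intro b hb
      obtain ⟨n, hn⟩ := hb.exists
      refine le_trans ?_ hn
      rw [hFexp l n]
      exact (Real.exp_pos _).le
    have hc1 : sSup {x : ℝ | ∀ᶠ l in nhdsWithin (1:ℝ) (Set.Ioo 0 1), x ≤ limsup (fun n : ℕ =>
        (mulAbs (∏ k ∈ Finset.Ioc ⌊l * (n : ℝ)⌋₊ n, (u n / u k) ^ p k)) ^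
          (1 / (Psum p n - Psum p ⌊l * (n : ℝ)⌋₊))) atTop} = 1 := by
      rw [← liminf_eq]
      exact hcond
    have h0 : (0:ℝ) ∈ {x : ℝ | ∀ᶠ l in nhdsWithin (1:ℝ) (Set.Ioo 0 1), x ≤ limsup (fun n : ℕ =>
        (mulAbs (∏ k ∈ Finset.Ioc ⌊l * (n : ℝ)⌋₊ n, (u n / u k) ^ p k)) ^
          (1 / (Psum p n - Psum p ⌊l * (n : ℝ)⌋₊))) atTop} := by
      simp only [Set.mem_setOf_eq]
      exact Eventually.of_forall fun l' => hLnn l'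
    have hne : Set.Nonempty {x : ℝ | ∀ᶠ l in nhdsWithin (1:ℝ) (Set.Ioo 0 1), x ≤ limsup (fun n : ℕ =>
        (mulAbs (∏ k ∈ Finset.Ioc ⌊l * (n : ℝ)⌋₊ n, (u n / u k) ^ p k)) ^
          (1 / (Psum p n - Psum p ⌊l * (n : ℝ)⌋₊))) atTop} := ⟨0, h0⟩
    have hbddS : BddAbove {x : ℝ | ∀ᶠ l in nhdsWithin (1:ℝ) (Set.Ioo 0 1), x ≤ limsup (fun n : ℕ =>
        (mulAbs (∏ k ∈ Finset.Ioc ⌊l * (n : ℝ)⌋₊ n, (u n / u k) ^ p k)) ^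
          (1 / (Psum p n - Psum p ⌊l * (n : ℝ)⌋₊))) atTop} := by
      by_contra hb
      rw [Real.sSup_of_not_bddAbove hb] at hc1
      norm_num at hc1
    have hhalf : ∃ b ∈ {x : ℝ | ∀ᶠ l in nhdsWithin (1:ℝ) (Set.Ioo 0 1), x ≤ limsup (fun n : ℕ =>
        (mulAbs (∏ k ∈ Finset.Ioc ⌊l * (n : ℝ)⌋₊ n, (u n / u k) ^ p k)) ^
          (1 / (Psum p n - Psum p ⌊l * (n : ℝ)⌋₊))) atTop}, (1:ℝ)/2 < b := by
      by_contra hb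
      push_neg at hb
      have h5 := csSup_le hne hb
      rw [hc1] at h5
      linarith
    obtain ⟨b, hbSS, hb2⟩ := hhalf
    have hlow : ∀ᶠ l in nhdsWithin (1:ℝ) (Set.Ioo 0 1), (1:ℝ)/2 < limsup (fun n : ℕ =>
        (mulAbs (∏ k ∈ Finset.Ioc ⌊l * (n : ℝ)⌋₊ n, (u n / u k) ^ p k)) ^
          (1 / (Psum p n - Psum p ⌊l * (n : ℝ)⌋₊))) atTop :=
      Eventually.mono hbSS fun l h => lt_of_lt_of_le hb2 h
    suffices hv : Tendsto (fun n => Real.log (u n)) atTop (nhds A) by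
      have h2 := (Real.continuous_exp.tendsto A).comp hv
      have h3 : ∀ n, Real.exp (Real.log (u n)) = u n := fun n => Real.exp_log (hu n)
      have h4 : Real.exp A = a := Real.exp_log ha
      have h5 : (Real.exp ∘ fun n => Real.log (u n)) = u := funext fun n => Real.exp_log (hu n)
      rw [h5, h4] at h2
      exact h2
    rw [Metric.tendsto_atTop]
    intro δ hδ
    have hε : (0:ℝ) < δ/6 := by linarith
    have hfreq : ∃ᶠ l in nhdsWithin (1:ℝ) (Set.Ioo 0 1), limsup (fun n : ℕ =>
        (mulAbs (∏ k ∈ Finset.Ioc ⌊l * (n : ℝ)⌋₊ n, (u n / u k) ^ p k)) ^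
          (1 / (Psum p n - Psum p ⌊l * (n : ℝ)⌋₊))) atTop ≤ 1 + δ/6 := by
      by_contra hf
      rw [not_frequently] at hf
      have hmem : (1 + δ/6) ∈ {x : ℝ | ∀ᶠ l in nhdsWithin (1:ℝ) (Set.Ioo 0 1), x ≤ limsup (fun n : ℕ =>
          (mulAbs (∏ k ∈ Finset.Ioc ⌊l * (n : ℝ)⌋₊ n, (u n / u k) ^ p k)) ^
            (1 / (Psum p n - Psum p ⌊l * (n : ℝ)⌋₊))) atTop} :=
        hf.mono fun l h => le_of_lt (not_le.mp h)
      have h5 := le_csSup hbddS hmem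
      rw [hc1] at h5
      linarith
    obtain ⟨l, hlle, hlhalf, hl01⟩ :=
      (hfreq.and_eventually (hlow.and self_mem_nhdsWithin)).exists
    have hbu : IsBoundedUnder (· ≤ ·) atTop (fun n : ℕ =>
        (mulAbs (∏ k ∈ Finset.Ioc ⌊l * (n : ℝ)⌋₊ n, (u n / u k) ^ p k)) ^
          (1 / (Psum p n - Psum p ⌊l * (n : ℝ)⌋₊))) := by
      by_contra hnb
      have hempty : {x : ℝ | ∀ᶠ n : ℕ in atTop,
          (mulAbs (∏ k ∈ Finset.Ioc ⌊l * (n : ℝ)⌋₊ n, (u n / u k) ^ p k)) ^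
            (1 / (Psum p n - Psum p ⌊l * (n : ℝ)⌋₊)) ≤ x} = ∅ := by
        apply Set.eq_empty_iff_forall_notMem.mpr
        intro x hx
        exact hnb ⟨x, hx⟩
      have hz : limsup (fun n : ℕ =>
          (mulAbs (∏ k ∈ Finset.Ioc ⌊l * (n : ℝ)⌋₊ n, (u n / u k) ^ p k)) ^
            (1 / (Psum p n - Psum p ⌊l * (n : ℝ)⌋₊))) atTop = 0 := by
        rw [limsup_eq, hempty, Real.sInf_empty]
      rw [hz] at hlhalf
      linarith
    have hev2 : ∀ᶠ n : ℕ in atTop,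
        (mulAbs (∏ k ∈ Finset.Ioc ⌊l * (n : ℝ)⌋₊ n, (u n / u k) ^ p k)) ^
          (1 / (Psum p n - Psum p ⌊l * (n : ℝ)⌋₊)) < 1 + δ/3 :=
      eventually_lt_of_limsup_lt (lt_of_le_of_lt hlle (by linarith)) hbu
    obtain ⟨M, hM, hFeq⟩ := hkey l hl01
    have hM' : ∀ᶠ n in atTop, |M n - A| < δ/6 := by
      obtain ⟨N, hN⟩ := Metric.tendsto_atTop.mp hM (δ/6) hε
      exact eventually_atTop.mpr ⟨N, fun n hn => by simpa [Real.dist_eq] using hN n hn⟩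
    have hfinal : ∀ᶠ n in atTop, dist (Real.log (u n)) A < δ := by
      filter_upwards [hev2, hFeq, hM'] with n h1 h2 h3
      rw [h2] at h1
      have h6 : |Real.log (u n) - M n| < Real.log (1 + δ/3) := by
        have := Real.log_lt_log (Real.exp_pos _) h1
        rwa [Real.log_exp] at this
      have h7 : Real.log (1 + δ/3) ≤ δ/3 := by
        have := Real.log_le_sub_one_of_pos (by linarith : (0:ℝ) < 1 + δ/3)
        linarith
      rw [Real.dist_eq]
      have h8 : |Real.log (u n) - A| ≤ |Real.log (u n) - M n| + |M n - A| := by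
        calc |Real.log (u n) - A| = |(Real.log (u n) - M n) + (M n - A)| := by congr 1; ring
          _ ≤ _ := abs_add_le _ _
      linarith
    exact eventually_atTop.mp hfinal
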